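/- Let n ≥ 5 be an integer. Any resolving set for the Johnson graph J(n,2) is also a resolving set for the Kneser graph K(n,2); consequently β(J(n,2)) = β(K(n,2)). -/

import Mathlib

/-- The Johnson graph `J(n,k)`: vertices are the `k`-element subsets of `{1,...,n}`,
two vertices adjacent iff their intersection has `k-1` elements. -/
def johnsonGraph (n k : ℕ) : SimpleGraph {s : Finset (Fin n) // s.card = k} where
  Adj U W := U ≠ W ∧ (U.1 ∩ W.1).card = k - 1
  symm := by
    constructor
    intro U W h
    exact ⟨h.1.symm, by rw [Finset.inter_comm]; exact h.2⟩
  loopless := by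
    constructor
    intro U h
    exact h.1 rfl

/-- The Kneser graph `K(n,k)`: vertices are the `k`-element subsets of `{1,...,n}`,
two vertices adjacent iff the corresponding subsets are disjoint. -/
def kneserGraph (n k : ℕ) : SimpleGraph {s : Finset (Fin n) // s.card = k} where
  Adj U W := U ≠ W ∧ Disjoint U.1 W.1
  symm := by
    constructor
    intro U W h
    exact ⟨h.1.symm, h.2.symm⟩
  loopless := by
    constructor
    intro U h
    exact h.1 rfl

/-- A set `S` of vertices is a resolving set for `G` if every pair of distinct
vertices is resolved by some vertex of `S`, i.e. is at different distances from it. -/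
def resolvingSet {V : Type*} (G : SimpleGraph V) (S : Set V) : Prop :=
  ∀ u v : V, u ≠ v → ∃ x ∈ S, G.dist u x ≠ G.dist v x

/-- The metric dimension `β(G)`: the minimum cardinality of a resolving set for `G`. -/
noncomputable def metricDim {V : Type*} (G : SimpleGraph V) : ℕ :=
  sInf {m | ∃ S : Finset V, resolvingSet G ↑S ∧ S.card = m}

namespace JK

variable {n : ℕ}

lemma inter_cases (u v : {s : Finset (Fin n) // s.card = 2}) (h : u ≠ v) :
    (u.1 ∩ v.1).card = 0 ∨ (u.1 ∩ v.1).card = 1 := by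
  have h2 : (u.1 ∩ v.1).card ≤ 2 :=
    le_trans (Finset.card_le_card Finset.inter_subset_left) (le_of_eq u.2)
  have hne : (u.1 ∩ v.1).card ≠ 2 := by
    intro hc
    have heq : u.1 ∩ v.1 = u.1 :=
      Finset.eq_of_subset_of_card_le Finset.inter_subset_left (by omega)
    have hsub : u.1 ⊆ v.1 := heq ▸ Finset.inter_subset_right
    exact h (Subtype.ext (Finset.eq_of_subset_of_card_le hsub (by rw [u.2, v.2])))
  omega

lemma midJ (u v : {s : Finset (Fin n) // s.card = 2}) (hd : (u.1 ∩ v.1).card = 0) (h : u ≠ v) :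
    ∃ w, (johnsonGraph n 2).Adj u w ∧ (johnsonGraph n 2).Adj w v := by
  have hdisj : Disjoint u.1 v.1 := by
    rwa [Finset.card_eq_zero, ← Finset.disjoint_iff_inter_eq_empty] at hd
  obtain ⟨a, ha⟩ := Finset.card_pos.mp (by rw [u.2]; norm_num)
  obtain ⟨b, hb⟩ := Finset.card_pos.mp (by rw [v.2]; norm_num)
  have hab : a ≠ b := fun h => (Finset.disjoint_left.mp hdisj ha) (h ▸ hb)
  have hbu : b ∉ u.1 := fun hc => (Finset.disjoint_left.mp hdisj hc) hb
  have hav : a ∉ v.1 := fun hc => (Finset.disjoint_left.mp hdisj ha) hc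
  refine ⟨⟨{a, b}, Finset.card_pair hab⟩, ⟨?_, ?_⟩, ⟨?_, ?_⟩⟩
  · intro hc
    exact hbu (by rw [Subtype.ext_iff] at hc; rw [hc]; simp)
  · have : u.1 ∩ {a, b} = {a} := by
      ext x
      simp only [Finset.mem_inter, Finset.mem_insert, Finset.mem_singleton]
      constructor
      · rintro ⟨hx, rfl | rfl⟩
        · rfl
        · exact absurd hx hbu
      · rintro rfl; exact ⟨ha, Or.inl rfl⟩
    rw [this]; rfl
  · intro hc
    exact hav (by rw [Subtype.ext_iff] at hc; rw [← hc]; simp)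
  · have : ({a, b} : Finset (Fin n)) ∩ v.1 = {b} := by
      ext x
      simp only [Finset.mem_inter, Finset.mem_insert, Finset.mem_singleton]
      constructor
      · rintro ⟨rfl | rfl, hx⟩
        · exact absurd hx hav
        · rfl
      · rintro rfl; exact ⟨Or.inr rfl, hb⟩
    rw [this]; rfl

lemma midK (hn : 5 ≤ n) (u v : {s : Finset (Fin n) // s.card = 2})
    (h1 : (u.1 ∩ v.1).card = 1) :
    ∃ w, (kneserGraph n 2).Adj u w ∧ (kneserGraph n 2).Adj w v := by
  have hcard : (u.1 ∪ v.1).card = 3 := by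
    have := Finset.card_union_add_card_inter u.1 v.1
    rw [u.2, v.2, h1] at this
    omega
  have h2 : 2 ≤ (u.1 ∪ v.1)ᶜ.card := by
    rw [Finset.card_compl, Fintype.card_fin]
    exact Nat.le_sub_of_add_le (by omega)
  obtain ⟨w, hw, hwc⟩ := Finset.exists_subset_card_eq h2
  have hdu : Disjoint u.1 w := by
    refine Finset.disjoint_left.mpr fun x hx hxw => ?_
    have := hw hxw
    rw [Finset.mem_compl] at this
    exact this (Finset.mem_union_left _ hx)
  have hdv : Disjoint w v.1 := by
    refine Finset.disjoint_left.mpr fun x hxw hx => ?_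
    have := hw hxw
    rw [Finset.mem_compl] at this
    exact this (Finset.mem_union_right _ hx)
  have hwne : w.Nonempty := Finset.card_pos.mp (by omega)
  refine ⟨⟨w, hwc⟩, ⟨?_, hdu⟩, ⟨?_, hdv⟩⟩
  · intro hc
    obtain ⟨x, hx⟩ := hwne
    exact Finset.disjoint_left.mp hdu (by rw [Subtype.ext_iff] at hc; rw [hc]; exact hx) hx
  · intro hc
    obtain ⟨x, hx⟩ := hwne
    exact Finset.disjoint_left.mp hdv hx (by rw [Subtype.ext_iff] at hc; rw [← hc]; exact hx)

lemma dist_two_of_mid {V : Type*} {G : SimpleGraph V} {u v : V} (h : u ≠ v)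
    (hna : ¬ G.Adj u v) (hm : ∃ w, G.Adj u w ∧ G.Adj w v) : G.dist u v = 2 := by
  obtain ⟨w, h1, h2⟩ := hm
  have hle : G.dist u v ≤ 2 :=
    SimpleGraph.dist_le (SimpleGraph.Walk.cons h1 (SimpleGraph.Walk.cons h2 SimpleGraph.Walk.nil))
  have h0 : G.dist u v ≠ 0 := by
    rw [SimpleGraph.dist_ne_zero_iff_ne_and_reachable]
    exact ⟨h, ⟨SimpleGraph.Walk.cons h1 (SimpleGraph.Walk.cons h2 SimpleGraph.Walk.nil)⟩⟩
  have h1' : G.dist u v ≠ 1 := fun hc => hna (SimpleGraph.dist_eq_one_iff_adj.mp hc)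
  omega

lemma distJ (u v : {s : Finset (Fin n) // s.card = 2}) (h : u ≠ v) :
    (johnsonGraph n 2).dist u v = if (u.1 ∩ v.1).card = 1 then 1 else 2 := by
  rcases inter_cases u v h with h0 | h1
  · rw [if_neg (by omega)]
    exact dist_two_of_mid h (fun hc => by have := hc.2; omega) (midJ u v h0 h)
  · rw [if_pos h1]
    exact SimpleGraph.dist_eq_one_iff_adj.mpr ⟨h, h1⟩

lemma distK (hn : 5 ≤ n) (u v : {s : Finset (Fin n) // s.card = 2}) (h : u ≠ v) :
    (kneserGraph n 2).dist u v = if (u.1 ∩ v.1).card = 1 then 2 else 1 := by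
  rcases inter_cases u v h with h0 | h1
  · rw [if_neg (by omega)]
    refine SimpleGraph.dist_eq_one_iff_adj.mpr ⟨h, ?_⟩
    rwa [Finset.card_eq_zero, ← Finset.disjoint_iff_inter_eq_empty] at h0
  · rw [if_pos h1]
    refine dist_two_of_mid h ?_ (midK hn u v h1)
    intro hc
    have := Finset.card_eq_zero.mpr (Finset.disjoint_iff_inter_eq_empty.mp hc.2)
    omega

lemma resolve_transfer (hn : 5 ≤ n) (u v x : {s : Finset (Fin n) // s.card = 2})
    (huv : u ≠ v) (hJ : (johnsonGraph n 2).dist u x ≠ (johnsonGraph n 2).dist v x) :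
    (kneserGraph n 2).dist u x ≠ (kneserGraph n 2).dist v x := by
  by_cases hux : u = x
  · subst hux
    have hvx : v ≠ u := huv.symm
    rw [SimpleGraph.dist_self, distK hn v u hvx]
    split <;> omega
  by_cases hvx : v = x
  · subst hvx
    rw [SimpleGraph.dist_self, distK hn u v hux]
    split <;> omega
  · rw [distJ u x hux, distJ v x hvx] at hJ
    rw [distK hn u x hux, distK hn v x hvx]
    split at hJ <;> split at hJ <;> simp_all

lemma resolve_transfer' (hn : 5 ≤ n) (u v x : {s : Finset (Fin n) // s.card = 2})
    (huv : u ≠ v) (hK : (kneserGraph n 2).dist u x ≠ (kneserGraph n 2).dist v x) :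
    (johnsonGraph n 2).dist u x ≠ (johnsonGraph n 2).dist v x := by
  by_cases hux : u = x
  · subst hux
    have hvx : v ≠ u := huv.symm
    rw [SimpleGraph.dist_self, distJ v u hvx]
    split <;> omega
  by_cases hvx : v = x
  · subst hvx
    rw [SimpleGraph.dist_self, distJ u v hux]
    split <;> omega
  · rw [distK hn u x hux, distK hn v x hvx] at hK
    rw [distJ u x hux, distJ v x hvx]
    split at hK <;> split at hK <;> simp_all

end JK

/-- For `n ≥ 5`, any resolving set for the Johnson graph `J(n,2)` is also a resolving
set for the Kneser graph `K(n,2)`; consequently `β(J(n,2)) = β(K(n,2))`. -/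



theorem johnson_resolving_implies_kneser_k2 (n : ℕ) (hn : 5 ≤ n) :
    (∀ S : Set {s : Finset (Fin n) // s.card = 2},
      resolvingSet (johnsonGraph n 2) S → resolvingSet (kneserGraph n 2) S) ∧
    metricDim (johnsonGraph n 2) = metricDim (kneserGraph n 2) := by
  have hiff : ∀ S : Set {s : Finset (Fin n) // s.card = 2},
      resolvingSet (johnsonGraph n 2) S ↔ resolvingSet (kneserGraph n 2) S := by
    intro S
    constructor
    · intro hS u v huv
      obtain ⟨x, hxS, hx⟩ := hS u v huv
      exact ⟨x, hxS, JK.resolve_transfer hn u v x huv hx⟩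
    · intro hS u v huv
      obtain ⟨x, hxS, hx⟩ := hS u v huv
      exact ⟨x, hxS, JK.resolve_transfer' hn u v x huv hx⟩
  refine ⟨fun S h => (hiff S).mp h, ?_⟩
  unfold metricDim
  congr 1
  ext m
  simp only [Set.mem_setOf_eq]
  exact ⟨fun ⟨S, h, hc⟩ => ⟨S, (hiff _).mp h, hc⟩,
    fun ⟨S, h, hc⟩ => ⟨S, (hiff _).mpr h, hc⟩⟩
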